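/- arXiv:1511.03693 — 5 statements merged into one kernel-verified Lean document; each statement's English description precedes it below -/
import Mathlib

section
/- Let f :⊆ A ⇉ B and g :⊆ C ⇉ D be partial multivalued functions between represented spaces. Then f ≤_sW^c g if and only if there exist continuous partial multivalued functions k :⊆ A ⇉ C and h :⊆ D ⇉ B such that h ∘ g ∘ k ⪯ f. -/
open Filter Topology

/-! ### Partial functions on Baire space -/

/-- A partial function on Baire space, given by a domain and an underlying total
function (whose values outside the domain are irrelevant). -/
structure PFunB where
  dom : Set (ℕ → ℕ)
  toFun : (ℕ → ℕ) → (ℕ → ℕ)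

/-- A partial function on Baire space is continuous if its underlying function is
continuous on its domain. -/
def PFunB.IsContinuous (F : PFunB) : Prop := ContinuousOn F.toFun F.dom

/-- Composition of partial functions on Baire space. -/
def PFunB.comp (F G : PFunB) : PFunB where
  dom := {p | p ∈ G.dom ∧ G.toFun p ∈ F.dom}
  toFun := fun p => F.toFun (G.toFun p)

/-- A partial function from (Baire space) × (Baire space) to Baire space. -/
structure PFunB2 where
  dom : Set ((ℕ → ℕ) × (ℕ → ℕ))
  toFun : (ℕ → ℕ) × (ℕ → ℕ) → (ℕ → ℕ)

def PFunB2.IsContinuous (K : PFunB2) : Prop := ContinuousOn K.toFun K.dom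

/-! ### Coding of sequences -/

/-- The `n`-th column of `p : ℕ → ℕ`, via the standard pairing bijection. -/
def col (p : ℕ → ℕ) (n : ℕ) : ℕ → ℕ := fun k => p (Nat.pair n k)

/-- Interleaving pairing of two elements of Baire space. -/
def pairB (p q : ℕ → ℕ) : ℕ → ℕ := fun n => if n % 2 = 0 then p (n / 2) else q (n / 2)

def leftB (r : ℕ → ℕ) : ℕ → ℕ := fun n => r (2 * n)

def rightB (r : ℕ → ℕ) : ℕ → ℕ := fun n => r (2 * n + 1)

theorem leftB_pairB (p q : ℕ → ℕ) : leftB (pairB p q) = p := by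
  funext n
  show (if (2 * n) % 2 = 0 then p ((2 * n) / 2) else q ((2 * n) / 2)) = p n
  rw [if_pos (by omega)]
  congr 1
  omega

theorem rightB_pairB (p q : ℕ → ℕ) : rightB (pairB p q) = q := by
  funext n
  show (if (2 * n + 1) % 2 = 0 then p ((2 * n + 1) / 2) else q ((2 * n + 1) / 2)) = q n
  rw [if_neg (by omega)]
  congr 1
  omega

/-! ### Represented spaces -/

/-- A represented space: a set `X` together with a partial surjection from Baire space
onto `X` (modelled as a total map together with a domain, such that every point has a
name in the domain). -/
structure RepSpace (X : Type u) where
  dom : Set (ℕ → ℕ)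
  map : (ℕ → ℕ) → X
  surj : ∀ x : X, ∃ p ∈ dom, map p = x

/-- Baire space with the identity representation. -/
def idRep : RepSpace (ℕ → ℕ) := ⟨Set.univ, id, fun x => ⟨x, trivial, rfl⟩⟩

/-- The representation of `X`, viewed as a partial multivalued function from Baire
space to `X` (with empty value outside the domain). -/
def RepSpace.toMV {X : Type u} (δ : RepSpace X) : (ℕ → ℕ) → Set X :=
  fun p => {x | p ∈ δ.dom ∧ δ.map p = x}

/-- Product of represented spaces, via the interleaving pairing homeomorphism. -/
def RepSpace.prod {X : Type u} {Y : Type v} (δX : RepSpace X) (δY : RepSpace Y) :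
    RepSpace (X × Y) where
  dom := {r | leftB r ∈ δX.dom ∧ rightB r ∈ δY.dom}
  map := fun r => (δX.map (leftB r), δY.map (rightB r))
  surj := by
    rintro ⟨x, y⟩
    obtain ⟨p, hp, hpx⟩ := δX.surj x
    obtain ⟨q, hq, hqy⟩ := δY.surj y
    refine ⟨pairB p q, ⟨?_, ?_⟩, ?_⟩
    · rw [leftB_pairB]; exact hp
    · rw [rightB_pairB]; exact hq
    · show (δX.map (leftB (pairB p q)), δY.map (rightB (pairB p q))) = (x, y)
      rw [leftB_pairB, rightB_pairB, hpx, hqy]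

/-- The represented space of sequences in `X`: `δ(p) = (δ_X((p)_n))_n`. -/
def RepSpace.seq {X : Type u} (δ : RepSpace X) : RepSpace (ℕ → X) where
  dom := {p | ∀ n, col p n ∈ δ.dom}
  map := fun p n => δ.map (col p n)
  surj := by
    intro x
    choose q hq hmap using fun n => δ.surj (x n)
    have hcol : ∀ n, col (fun m => q (Nat.unpair m).1 (Nat.unpair m).2) n = q n := by
      intro n; funext k; simp [col]
    refine ⟨fun m => q (Nat.unpair m).1 (Nat.unpair m).2, fun n => ?_, ?_⟩
    · rw [hcol]; exact hq n
    · funext n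
      show δ.map (col (fun m => q (Nat.unpair m).1 (Nat.unpair m).2) n) = x n
      rw [hcol]; exact hmap n

/-! ### Partial multivalued functions -/

/-- Composition of partial multivalued functions (with the domain convention
`dom (f ∘ g) = {x ∈ dom g : g x ⊆ dom f}`; a partial multivalued function is modelled
as a `Set`-valued function whose domain is the set of points with nonempty value). -/
def MComp {X : Type u} {Y : Type v} {Z : Type w} (f : Y → Set Z) (g : X → Set Y) :
    X → Set Z :=
  fun x => {z | (∀ y ∈ g x, (f y).Nonempty) ∧ ∃ y ∈ g x, z ∈ f y}

/-- `f` tightens `g`: `dom g ⊆ dom f` and `f x ⊆ g x` for every `x ∈ dom g`. -/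
def Tightens {X : Type u} {Y : Type v} (f g : X → Set Y) : Prop :=
  ∀ x, (g x).Nonempty → (f x).Nonempty ∧ f x ⊆ g x

/-- `F` is a realizer of the partial multivalued function `f`. -/
def Realizes {X : Type u} {Y : Type v} (δX : RepSpace X) (δY : RepSpace Y)
    (F : PFunB) (f : X → Set Y) : Prop :=
  ∀ p ∈ δX.dom, (f (δX.map p)).Nonempty →
    p ∈ F.dom ∧ F.toFun p ∈ δY.dom ∧ δY.map (F.toFun p) ∈ f (δX.map p)

/-- A partial multivalued function between represented spaces is continuous if it has a
continuous realizer. -/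
def MCts {X : Type u} {Y : Type v} (δX : RepSpace X) (δY : RepSpace Y)
    (f : X → Set Y) : Prop :=
  ∃ F : PFunB, F.IsContinuous ∧ Realizes δX δY F f

/-- Strong continuous Weihrauch reducibility `f ≤_sW^c g`. -/
def StrongWc {A : Type u} {B : Type v} {C : Type w} {D : Type x}
    (δA : RepSpace A) (δB : RepSpace B) (δC : RepSpace C) (δD : RepSpace D)
    (f : A → Set B) (g : C → Set D) : Prop :=
  ∃ K H : PFunB, K.IsContinuous ∧ H.IsContinuous ∧
    ∀ G : PFunB, Realizes δC δD G g → Realizes δA δB (K.comp (G.comp H)) f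

/-- Continuous Weihrauch reducibility `f ≤_W^c g`. -/
def Wc {A : Type u} {B : Type v} {C : Type w} {D : Type x}
    (δA : RepSpace A) (δB : RepSpace B) (δC : RepSpace C) (δD : RepSpace D)
    (f : A → Set B) (g : C → Set D) : Prop :=
  ∃ (K : PFunB2) (H : PFunB), K.IsContinuous ∧ H.IsContinuous ∧
    ∀ G : PFunB, Realizes δC δD G g →
      Realizes δA δB
        ⟨{p | p ∈ H.dom ∧ H.toFun p ∈ G.dom ∧ (p, G.toFun (H.toFun p)) ∈ K.dom},
          fun p => K.toFun (p, G.toFun (H.toFun p))⟩ f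

/-- Continuous Weihrauch equivalence `f ≡_W^c g`. -/
def WcEquiv {A : Type u} {B : Type v} {C : Type w} {D : Type x}
    (δA : RepSpace A) (δB : RepSpace B) (δC : RepSpace C) (δD : RepSpace D)
    (f : A → Set B) (g : C → Set D) : Prop :=
  Wc δA δB δC δD f g ∧ Wc δC δD δA δB g f

/-- `id_{ℕ^ℕ} × g` for a partial multivalued `g`. -/
def idProd {C : Type u} {D : Type v} (g : C → Set D) :
    (ℕ → ℕ) × C → Set ((ℕ → ℕ) × D) :=
  fun pc => {qd | qd.1 = pc.1 ∧ qd.2 ∈ g pc.2}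

/-- `f` is a cylinder if `id_{ℕ^ℕ} × f ≤_sW^c f`. -/
def IsCylinder {X : Type u} {Y : Type v} (δX : RepSpace X) (δY : RepSpace Y)
    (f : X → Set Y) : Prop :=
  StrongWc (idRep.prod δX) (idRep.prod δY) δX δY (idProd f) f

/-- `T :⊆ X ⇉ Y` is transparent: for every continuous `g :⊆ Y ⇉ Y` there is a
continuous `f :⊆ X ⇉ X` with `T ∘ f ⪯ g ∘ T`. -/
def Transparent {X : Type u} {Y : Type v} (δX : RepSpace X) (δY : RepSpace Y)
    (T : X → Set Y) : Prop :=
  ∀ g : Y → Set Y, MCts δY δY g →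
    ∃ f : X → Set X, MCts δX δX f ∧ Tightens (MComp T f) (MComp g T)

/-- `ζ :⊆ Y ⇉ ℕ^ℕ` is a probe for `Y`: it is continuous, and for every continuous
`f :⊆ Y ⇉ ℕ^ℕ` there is a continuous `e :⊆ Y ⇉ Y` with `ζ ∘ e ⪯ f`. -/
def IsProbe {Y : Type u} (δY : RepSpace Y) (ζ : Y → Set (ℕ → ℕ)) : Prop :=
  MCts δY idRep ζ ∧
    ∀ f : Y → Set (ℕ → ℕ), MCts δY idRep f →
      ∃ e : Y → Set Y, MCts δY δY e ∧ Tightens (MComp ζ e) f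

/-- Parallelization of a partial multivalued function. -/
def Parallel {X : Type u} {Y : Type v} (f : X → Set Y) : (ℕ → X) → Set (ℕ → Y) :=
  fun xs => {ys | ∀ n, ys n ∈ f (xs n)}

/-! ### Games -/

/-- A strategy for player II: to each finite sequence of I's moves it assigns a natural
number or a pass (`none`). -/
abbrev Strategy := List ℕ → Option ℕ

/-- The move of player II (following `σ`) after I has played `x 0, …, x n`. -/
def respond (σ : Strategy) (x : ℕ → ℕ) (n : ℕ) : Option ℕ :=
  σ (List.ofFn fun i : Fin (n + 1) => x i)

/-- Player II plays natural numbers at infinitely many rounds of the run against `x`. -/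
def InfPlays (σ : Strategy) (x : ℕ → ℕ) : Prop :=
  {n | (respond σ x n).isSome = true}.Infinite

/-- The element of Baire space built by player II in the run against `x`
(the subsequence of her non-pass moves). -/
noncomputable def output (σ : Strategy) (x : ℕ → ℕ) : ℕ → ℕ :=
  fun k => (respond σ x (Nat.nth (fun n => (respond σ x n).isSome = true) k)).getD 0

/-- The partial multivalued function `δ_B ∘ ζ ∘ T ∘ δ_X :⊆ ℕ^ℕ ⇉ B` used in the winning
condition of the `(ζ, T)`-Wadge game. -/
def GameMap {X : Type u} {Y : Type v} {B : Type w} (δX : RepSpace X) (δB : RepSpace B)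
    (ζ : Y → Set (ℕ → ℕ)) (T : X → Set Y) : (ℕ → ℕ) → Set B :=
  MComp δB.toMV (MComp ζ (MComp T δX.toMV))

/-- `σ` is a winning strategy for player II in the `(ζ, T)`-Wadge game for `f`:
for every run `x` built by player I with `x ∈ dom (f ∘ δ_A)`, player II plays natural
numbers infinitely often, her output `y` lies in `dom (δ_B ∘ ζ ∘ T ∘ δ_X)`, and
`(δ_B ∘ ζ ∘ T ∘ δ_X)(y) ⊆ (f ∘ δ_A)(x)` (runs with `x ∉ dom (f ∘ δ_A)` are won by II
automatically). -/
def WadgeWinning {X : Type u} {Y : Type v} {A : Type w} {B : Type x}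
    (δX : RepSpace X) (δA : RepSpace A) (δB : RepSpace B)
    (ζ : Y → Set (ℕ → ℕ)) (T : X → Set Y) (f : A → Set B) (σ : Strategy) : Prop :=
  ∀ x : ℕ → ℕ, (MComp f δA.toMV x).Nonempty →
    InfPlays σ x ∧
    (GameMap δX δB ζ T (output σ x)).Nonempty ∧
    GameMap δX δB ζ T (output σ x) ⊆ MComp f δA.toMV x

/-! ### lim, isFinite and the Baire hierarchy -/

/-- The partial function `lim :⊆ ℕ^ℕ → ℕ^ℕ`, `lim(p) = lim_n (p)_n` (pointwise limit),
viewed as a partial multivalued function with singleton values on its domain. -/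
def limFn : (ℕ → ℕ) → Set (ℕ → ℕ) :=
  fun p => {q | ∀ k, ∀ᶠ n in atTop, col p n k = q k}

/-- The space `{0,1}^ℕ` of binary sequences. -/
abbrev BSeq : Type := {p : ℕ → ℕ // ∀ n, p n ≤ 1}

/-- `{0,1}^ℕ` with the identity representation (as a subspace of Baire space). -/
def repBSeq : RepSpace BSeq where
  dom := {p | ∀ n, p n ≤ 1}
  map := fun p => ⟨fun n => min (p n) 1, fun _ => min_le_right _ _⟩
  surj := fun x => ⟨x.1, x.2, Subtype.ext (funext fun n => min_eq_left (x.2 n))⟩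

/-- The two-point space `{0,1}`. -/
abbrev TwoPt : Type := {n : ℕ // n ≤ 1}

/-- The two-point space `{0,1}` represented by `δ(p) = p 0`. -/
def repTwo : RepSpace TwoPt where
  dom := {p | p 0 ≤ 1}
  map := fun p => ⟨min (p 0) 1, min_le_right _ _⟩
  surj := fun x => ⟨fun _ => x.1, x.2, Subtype.ext (min_eq_left x.2)⟩

open Classical in
/-- `isFinite(p) = 1` iff `{n : p n = 1}` is finite. -/
noncomputable def isFinite : BSeq → TwoPt :=
  fun p => if {n | p.1 n = 1}.Finite then ⟨1, le_refl 1⟩ else ⟨0, Nat.zero_le 1⟩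

/-- The finite levels of the Baire hierarchy: Baire class 0 functions are the continuous
ones, and Baire class `n+1` functions are pointwise limits of sequences of Baire class
`n` functions. -/
def BaireClass : ℕ → ((ℕ → ℕ) → (ℕ → ℕ)) → Prop
  | 0, f => Continuous f
  | n + 1, f => ∃ g : ℕ → (ℕ → ℕ) → (ℕ → ℕ),
      (∀ k, BaireClass n (g k)) ∧ ∀ x, Tendsto (fun k => g k x) atTop (𝓝 (f x))

/-- `f ≤_sW^c g` iff there exist continuous partial multivalued `k :⊆ A ⇉ C` and
`h :⊆ D ⇉ B` such that `h ∘ g ∘ k ⪯ f`. -/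
theorem strongWc_iff_tightens {A B C D : Type*}
    (δA : RepSpace A) (δB : RepSpace B) (δC : RepSpace C) (δD : RepSpace D)
    (f : A → Set B) (g : C → Set D) :
    StrongWc δA δB δC δD f g ↔
      ∃ (k : A → Set C) (h : D → Set B),
        MCts δA δC k ∧ MCts δD δB h ∧ Tightens (MComp h (MComp g k)) f := by
  constructor
  · rintro ⟨K, H, hKc, hHc, hmain⟩
    -- the set of names on which any realizer of g must work
    set S : Set (ℕ → ℕ) := {r | r ∈ δC.dom ∧ (g (δC.map r)).Nonempty} with hS
    -- choose a canonical realizer G₀ of g with domain S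
    have hch : ∀ r, r ∈ S → ∃ q, q ∈ δD.dom ∧ δD.map q ∈ g (δC.map r) := by
      intro r hr
      obtain ⟨d, hd⟩ := hr.2
      obtain ⟨q, hq, hmapq⟩ := δD.surj d
      exact ⟨q, hq, hmapq ▸ hd⟩
    choose! q0 hq0dom hq0mem using hch
    set G0 : PFunB := ⟨S, q0⟩ with hG0
    have hG0real : Realizes δC δD G0 g := by
      intro r hr hne
      have hrS : r ∈ S := ⟨hr, hne⟩
      exact ⟨hrS, hq0dom r hrS, hq0mem r hrS⟩
    -- Fact 0 : every name of a point in dom f is mapped by H into S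
    have fact0 : ∀ p ∈ δA.dom, (f (δA.map p)).Nonempty →
        p ∈ H.dom ∧ H.toFun p ∈ S := by
      intro p hp hne
      obtain ⟨hdom, -, -⟩ := hmain G0 hG0real p hp hne
      exact ⟨hdom.1.1, hdom.1.2⟩
    -- Fact ⋆ : every name of any value of g at δC(H p) is mapped well by K
    have factS : ∀ p ∈ δA.dom, (f (δA.map p)).Nonempty →
        ∀ q ∈ δD.dom, δD.map q ∈ g (δC.map (H.toFun p)) →
          q ∈ K.dom ∧ K.toFun q ∈ δB.dom ∧ δB.map (K.toFun q) ∈ f (δA.map p) := by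
      intro p hp hne q hq hqg
      classical
      set G1 : PFunB := ⟨S, fun r => if r = H.toFun p then q else q0 r⟩ with hG1
      have hG1real : Realizes δC δD G1 g := by
        intro r hr hner
        have hrS : r ∈ S := ⟨hr, hner⟩
        refine ⟨hrS, ?_, ?_⟩
        · show (if r = H.toFun p then q else q0 r) ∈ δD.dom
          split_ifs
          · exact hq
          · exact hq0dom r hrS
        · show δD.map (if r = H.toFun p then q else q0 r) ∈ g (δC.map r)
          split_ifs with hcase
          · rw [hcase]; exact hqg
          · exact hq0mem r hrS
      obtain ⟨hdom, hBdom, hmem⟩ := hmain G1 hG1real p hp hne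
      have hval : G1.toFun (H.toFun p) = q := if_pos rfl
      have hqK : q ∈ K.dom := by
        have := hdom.2
        simpa [PFunB.comp, hval] using this
      refine ⟨hqK, ?_, ?_⟩
      · simpa [PFunB.comp, hval] using hBdom
      · simpa [PFunB.comp, hval] using hmem
    -- define k and h
    set k : A → Set C := fun a =>
      {c | (f a).Nonempty ∧ ∃ p, p ∈ δA.dom ∧ δA.map p = a ∧ c = δC.map (H.toFun p)}
      with hk
    set h : D → Set B := fun d =>
      {b | (∃ p, p ∈ δA.dom ∧ (f (δA.map p)).Nonempty ∧
              d ∈ g (δC.map (H.toFun p))) ∧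
           ∃ q, q ∈ δD.dom ∧ δD.map q = d ∧ b = δB.map (K.toFun q)} with hh
    refine ⟨k, h, ⟨H, hHc, ?_⟩, ⟨K, hKc, ?_⟩, ?_⟩
    · -- H realizes k
      intro p hp hne
      obtain ⟨c, hfne, -⟩ := hne
      obtain ⟨hpH, hHS⟩ := fact0 p hp hfne
      exact ⟨hpH, hHS.1, hfne, p, hp, rfl, rfl⟩
    · -- K realizes h
      intro q hq hne
      obtain ⟨b, ⟨p, hp, hfne, hdg⟩, -⟩ := hne
      obtain ⟨hqK, hKB, hKf⟩ := factS p hp hfne q hq hdg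
      exact ⟨hqK, hKB, ⟨p, hp, hfne, hdg⟩, q, hq, rfl, rfl⟩
    · -- tightening
      intro a hfne
      have claim1 : ∀ c ∈ k a, (g c).Nonempty := by
        rintro c ⟨-, p, hp, hpa, rfl⟩
        have := (fact0 p hp (by rwa [hpa])).2
        exact this.2
      have claim2 : ∀ d ∈ MComp g k a, (h d).Nonempty := by
        rintro d ⟨-, c, ⟨-, p, hp, hpa, rfl⟩, hd⟩
        obtain ⟨q, hq, hmapq⟩ := δD.surj d
        have hfne' : (f (δA.map p)).Nonempty := by rwa [hpa]
        obtain ⟨hqK, hKB, -⟩ := factS p hp hfne' q hq (hmapq ▸ hd)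
        exact ⟨δB.map (K.toFun q), ⟨p, hp, hfne', hd⟩, q, hq, hmapq, rfl⟩
      constructor
      · -- nonemptiness of h ∘ g ∘ k at a
        obtain ⟨p, hp, hpa⟩ := δA.surj a
        have hc : δC.map (H.toFun p) ∈ k a := ⟨hfne, p, hp, hpa, rfl⟩
        obtain ⟨d, hd⟩ := claim1 _ hc
        have hdmem : d ∈ MComp g k a := ⟨claim1, _, hc, hd⟩
        obtain ⟨b, hb⟩ := claim2 d hdmem
        exact ⟨b, claim2, d, hdmem, hb⟩
      · -- h ∘ g ∘ k ⊆ f at a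
        rintro b ⟨-, d, ⟨-, c, ⟨-, p, hp, hpa, rfl⟩, hd⟩, -, q, hq, hmapq, rfl⟩
        have hfne' : (f (δA.map p)).Nonempty := by rwa [hpa]
        obtain ⟨-, -, hKf⟩ := factS p hp hfne' q hq (hmapq ▸ hd)
        rwa [hpa] at hKf
  · rintro ⟨k, h, ⟨Hk, hHkc, hHkr⟩, ⟨Kh, hKhc, hKhr⟩, htight⟩
    refine ⟨Kh, Hk, hKhc, hHkc, ?_⟩
    intro G hG p hp hfne
    obtain ⟨hcomp_ne, hcomp_sub⟩ := htight (δA.map p) hfne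
    obtain ⟨b0, hforall, d0, hd0, -⟩ := hcomp_ne
    obtain ⟨hgall, c0, hc0, -⟩ := hd0
    obtain ⟨hpHk, hHkC, hcmem⟩ := hHkr p hp ⟨c0, hc0⟩
    have hgne : (g (δC.map (Hk.toFun p))).Nonempty := hgall _ hcmem
    obtain ⟨hHkG, hGD, hdg⟩ := hG (Hk.toFun p) hHkC hgne
    have hdmem : δD.map (G.toFun (Hk.toFun p)) ∈ MComp g k (δA.map p) :=
      ⟨hgall, _, hcmem, hdg⟩
    have hhne := hforall _ hdmem
    obtain ⟨hGKh, hKhB, hbh⟩ := hKhr (G.toFun (Hk.toFun p)) hGD hhne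
    refine ⟨⟨⟨hpHk, hHkG⟩, hGKh⟩, hKhB, ?_⟩
    exact hcomp_sub ⟨hforall, _, hdmem, hbh⟩
end

section
/- Let f :⊆ A ⇉ B and g :⊆ C ⇉ D be partial multivalued functions between represented spaces. Then f ≤_W^c g if and only if there exist continuous partial multivalued functions k :⊆ A ⇉ ℕ^ℕ × C and h :⊆ ℕ^ℕ × D ⇉ B such that h ∘ (id_{ℕ^ℕ} × g) ∘ k ⪯ f. -/
open Filter Topology

theorem continuous_leftB' : Continuous leftB := continuous_pi fun _ => continuous_apply _

theorem continuous_rightB' : Continuous rightB := continuous_pi fun _ => continuous_apply _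

theorem continuous_pairB' : Continuous (fun r : (ℕ → ℕ) × (ℕ → ℕ) => pairB r.1 r.2) := by
  apply continuous_pi
  intro n
  by_cases h : n % 2 = 0 <;> simp only [pairB, h, if_true, if_false, reduceIte] <;>
    first
      | exact (continuous_apply _).comp continuous_fst
      | exact (continuous_apply _).comp continuous_snd

/-- `f ≤_W^c g` iff there exist continuous partial multivalued `k :⊆ A ⇉ ℕ^ℕ × C` and
`h :⊆ ℕ^ℕ × D ⇉ B` such that `h ∘ (id_{ℕ^ℕ} × g) ∘ k ⪯ f`. -/
theorem wc_iff_tightens {A B C D : Type*}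
    (δA : RepSpace A) (δB : RepSpace B) (δC : RepSpace C) (δD : RepSpace D)
    (f : A → Set B) (g : C → Set D) :
    Wc δA δB δC δD f g ↔
      ∃ (k : A → Set ((ℕ → ℕ) × C)) (h : (ℕ → ℕ) × D → Set B),
        MCts δA (idRep.prod δC) k ∧ MCts (idRep.prod δD) δB h ∧
        Tightens (MComp h (MComp (idProd g) k)) f := by
  constructor
  · rintro ⟨K, H, hKc, hHc, hyp⟩
    classical
    have aux : ∀ q : ℕ → ℕ, ∃ r : ℕ → ℕ,
        q ∈ δC.dom → (g (δC.map q)).Nonempty → r ∈ δD.dom ∧ δD.map r ∈ g (δC.map q) := by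
      intro q
      by_cases hq : q ∈ δC.dom ∧ (g (δC.map q)).Nonempty
      · obtain ⟨d, hd⟩ := hq.2
        obtain ⟨r, hr, hrm⟩ := δD.surj d
        exact ⟨r, fun _ _ => ⟨hr, hrm ▸ hd⟩⟩
      · exact ⟨fun _ => 0, fun h1 h2 => absurd ⟨h1, h2⟩ hq⟩
    choose pick hpick using aux
    have key : ∀ p ∈ δA.dom, (f (δA.map p)).Nonempty →
        (p ∈ H.dom ∧ H.toFun p ∈ δC.dom ∧ (g (δC.map (H.toFun p))).Nonempty) ∧
        ∀ q ∈ δD.dom, δD.map q ∈ g (δC.map (H.toFun p)) →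
          (p, q) ∈ K.dom ∧ K.toFun (p, q) ∈ δB.dom ∧
          δB.map (K.toFun (p, q)) ∈ f (δA.map p) := by
      intro p hp hfp
      have hG0 : Realizes δC δD ⟨{q | q ∈ δC.dom ∧ (g (δC.map q)).Nonempty}, pick⟩ g :=
        fun q hq hgq => ⟨⟨hq, hgq⟩, (hpick q hq hgq).1, (hpick q hq hgq).2⟩
      obtain ⟨hdom0, -, -⟩ := hyp _ hG0 p hp hfp
      obtain ⟨hpH, ⟨hC, hgne⟩, -⟩ := hdom0
      refine ⟨⟨hpH, hC, hgne⟩, ?_⟩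
      intro q hqD hqg
      have hGq : Realizes δC δD ⟨{q' | q' ∈ δC.dom ∧ (g (δC.map q')).Nonempty},
          fun q' => if q' = H.toFun p then q else pick q'⟩ g := by
        intro q' hq' hgq'
        refine ⟨⟨hq', hgq'⟩, ?_, ?_⟩
        · by_cases hc : q' = H.toFun p
          · show (if q' = H.toFun p then q else pick q') ∈ δD.dom
            rw [if_pos hc]; exact hqD
          · show (if q' = H.toFun p then q else pick q') ∈ δD.dom
            rw [if_neg hc]; exact (hpick q' hq' hgq').1
        · by_cases hc : q' = H.toFun p
          · show δD.map (if q' = H.toFun p then q else pick q') ∈ _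
            rw [if_pos hc]; rw [hc]; exact hqg
          · show δD.map (if q' = H.toFun p then q else pick q') ∈ _
            rw [if_neg hc]; exact (hpick q' hq' hgq').2
      obtain ⟨hdom, hBdom, hval⟩ := hyp _ hGq p hp hfp
      obtain ⟨-, -, hKd⟩ := hdom
      simp only [show (if H.toFun p = H.toFun p then q else pick (H.toFun p)) = q
        from if_pos rfl] at hKd hBdom hval
      exact ⟨hKd, hBdom, hval⟩
    refine ⟨fun a => {pc | pc.1 ∈ δA.dom ∧ δA.map pc.1 = a ∧ (f a).Nonempty ∧
        pc.2 = δC.map (H.toFun pc.1)},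
      fun qd => {b | qd.1 ∈ δA.dom ∧ (f (δA.map qd.1)).Nonempty ∧
        qd.2 ∈ g (δC.map (H.toFun qd.1)) ∧
        ∃ q ∈ δD.dom, δD.map q = qd.2 ∧ b = δB.map (K.toFun (qd.1, q))}, ?_, ?_, ?_⟩
    · -- k is continuous
      refine ⟨⟨H.dom, fun p => pairB p (H.toFun p)⟩, ?_, ?_⟩
      · exact continuous_pairB'.comp_continuousOn (continuousOn_id.prodMk hHc)
      · intro p hp hkne
        obtain ⟨⟨r, c⟩, -, -, hfne, -⟩ := hkne
        obtain ⟨⟨hpH, hCdom, -⟩, -⟩ := key p hp hfne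
        refine ⟨hpH, ⟨trivial, ?_⟩, ?_⟩
        · rw [rightB_pairB]; exact hCdom
        · show (idRep.map (leftB (pairB p (H.toFun p))),
            δC.map (rightB (pairB p (H.toFun p)))) ∈ _
          rw [leftB_pairB, rightB_pairB]
          exact ⟨hp, rfl, hfne, rfl⟩
    · -- h is continuous
      refine ⟨⟨{r | (leftB r, rightB r) ∈ K.dom}, fun r => K.toFun (leftB r, rightB r)⟩,
        ?_, ?_⟩
      · exact hKc.comp
          ((continuous_leftB'.continuousOn).prodMk (continuous_rightB'.continuousOn))
          (fun r hr => hr)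
      · intro r hr hne
        obtain ⟨-, hrD⟩ := hr
        obtain ⟨b0, hp1, hp2, hp3, -⟩ := hne
        obtain ⟨-, keyq⟩ := key (leftB r) hp1 hp2
        obtain ⟨hKdom, hBdom, -⟩ := keyq (rightB r) hrD hp3
        refine ⟨hKdom, hBdom, hp1, hp2, hp3, rightB r, hrD, rfl, rfl⟩
    · -- tightening
      intro a hfa
      obtain ⟨p0, hp0, hp0a⟩ := δA.surj a
      subst hp0a
      have hMouter : ∀ pc, pc ∈ (fun a => {pc : (ℕ → ℕ) × C | pc.1 ∈ δA.dom ∧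
          δA.map pc.1 = a ∧ (f a).Nonempty ∧ pc.2 = δC.map (H.toFun pc.1)}) (δA.map p0) →
          (idProd g pc).Nonempty := by
        rintro pc ⟨h1, h2, -, h4⟩
        obtain ⟨⟨-, -, d, hd⟩, -⟩ := key pc.1 h1 (by rw [h2]; exact hfa)
        exact ⟨(pc.1, d), rfl, by rw [h4]; exact hd⟩
      have hhne : ∀ qd, qd ∈ MComp (idProd g)
          (fun a => {pc : (ℕ → ℕ) × C | pc.1 ∈ δA.dom ∧ δA.map pc.1 = a ∧
            (f a).Nonempty ∧ pc.2 = δC.map (H.toFun pc.1)}) (δA.map p0) →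
          ((fun qd : (ℕ → ℕ) × D => {b | qd.1 ∈ δA.dom ∧ (f (δA.map qd.1)).Nonempty ∧
            qd.2 ∈ g (δC.map (H.toFun qd.1)) ∧
            ∃ q ∈ δD.dom, δD.map q = qd.2 ∧ b = δB.map (K.toFun (qd.1, q))}) qd).Nonempty := by
        rintro qd ⟨-, pc, ⟨hpc1, hpc2, -, hpc4⟩, hqd1, hqd2⟩
        obtain ⟨q, hqD, hqm⟩ := δD.surj qd.2
        refine ⟨δB.map (K.toFun (qd.1, q)), ?_, ?_, ?_, q, hqD, hqm, rfl⟩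
        · rw [hqd1]; exact hpc1
        · rw [hqd1, hpc2]; exact hfa
        · rw [hqd1]; rw [hpc4] at hqd2; exact hqd2
      constructor
      · -- nonemptiness
        obtain ⟨⟨hp0H, hp0C, d0, hd0⟩, keyq⟩ := key p0 hp0 hfa
        obtain ⟨q0, hq0D, hq0m⟩ := δD.surj d0
        have hq0g : δD.map q0 ∈ g (δC.map (H.toFun p0)) := by rw [hq0m]; exact hd0
        refine ⟨δB.map (K.toFun (p0, q0)), hhne, (p0, δD.map q0),
          ⟨hMouter, (p0, δC.map (H.toFun p0)), ⟨hp0, rfl, hfa, rfl⟩, rfl, hq0g⟩,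
          hp0, hfa, hq0g, q0, hq0D, rfl, rfl⟩
      · -- inclusion
        rintro b ⟨-, qd, ⟨-, pc, ⟨-, hpc2, -, -⟩, hqd1, -⟩, hb⟩
        obtain ⟨hb1, hb2, hb3, q, hqD, hqm, rfl⟩ := hb
        obtain ⟨-, keyq⟩ := key qd.1 hb1 hb2
        obtain ⟨-, -, hval⟩ := keyq q hqD (by rw [hqm]; exact hb3)
        rw [← hpc2, ← hqd1]
        exact hval
  · rintro ⟨k, h, ⟨Fk, hFkc, hFkr⟩, ⟨Fh, hFhc, hFhr⟩, htight⟩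
    refine ⟨⟨{pq | pq.1 ∈ Fk.dom ∧ pairB (leftB (Fk.toFun pq.1)) pq.2 ∈ Fh.dom},
        fun pq => Fh.toFun (pairB (leftB (Fk.toFun pq.1)) pq.2)⟩,
      ⟨Fk.dom, fun p => rightB (Fk.toFun p)⟩, ?_, ?_, ?_⟩
    · -- K continuity
      have h1 : ContinuousOn (fun pq : (ℕ → ℕ) × (ℕ → ℕ) =>
          pairB (leftB (Fk.toFun pq.1)) pq.2)
          {pq | pq.1 ∈ Fk.dom ∧ pairB (leftB (Fk.toFun pq.1)) pq.2 ∈ Fh.dom} := by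
        exact continuous_pairB'.comp_continuousOn
          ((continuous_leftB'.comp_continuousOn
              (hFkc.comp continuous_fst.continuousOn (fun pq hpq => hpq.1))).prodMk
            continuous_snd.continuousOn)
      exact hFhc.comp h1 (fun pq hpq => hpq.2)
    · -- H continuity
      exact continuous_rightB'.comp_continuousOn hFkc
    · intro G hG p hp hfne
      have ht := htight (δA.map p) hfne
      obtain ⟨b1, hb1out, y1, hy1M, -⟩ := ht.1
      obtain ⟨hkout, z1, hz1, -⟩ := hy1M
      obtain ⟨hpFk, hFkd, hkmem⟩ := hFkr p hp ⟨z1, hz1⟩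
      obtain ⟨-, hrC⟩ := hFkd
      have hgc : (g (δC.map (rightB (Fk.toFun p)))).Nonempty := by
        obtain ⟨qd, -, hqd2⟩ := hkout _ hkmem
        exact ⟨qd.2, hqd2⟩
      obtain ⟨hGdom, hGD, hGg⟩ := hG (rightB (Fk.toFun p)) hrC hgc
      have hyM : (leftB (Fk.toFun p), δD.map (G.toFun (rightB (Fk.toFun p)))) ∈
          MComp (idProd g) k (δA.map p) := ⟨hkout, _, hkmem, rfl, hGg⟩
      have hhne := hb1out _ hyM
      have hmap : (idRep.prod δD).map
          (pairB (leftB (Fk.toFun p)) (G.toFun (rightB (Fk.toFun p)))) =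
          (leftB (Fk.toFun p), δD.map (G.toFun (rightB (Fk.toFun p)))) := by
        show (idRep.map (leftB (pairB _ _)), δD.map (rightB (pairB _ _))) = _
        rw [leftB_pairB, rightB_pairB]
        rfl
      have hsD : pairB (leftB (Fk.toFun p)) (G.toFun (rightB (Fk.toFun p))) ∈
          (idRep.prod δD).dom := by
        refine ⟨trivial, ?_⟩
        rw [rightB_pairB]
        exact hGD
      obtain ⟨hsFh, hBdom, hval⟩ := hFhr _ hsD (by rw [hmap]; exact hhne)
      rw [hmap] at hval
      refine ⟨⟨hpFk, hGdom, hpFk, hsFh⟩, hBdom, ?_⟩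
      exact ht.2 ⟨hb1out, _, hyM, hval⟩
end

section
/- Let T :⊆ (X, δ_X) ⇉ (Y, δ_Y) be transparent and let (Z, δ_Z) be a subspace of (Y, δ_Y). Then the partial multivalued function S :⊆ (X, δ_X) ⇉ (Z, δ_Z) given by restricting T to {x ∈ dom(T) : T(x) ⊆ Z} is also transparent. -/
open Filter Topology

/-- If `T :⊆ X ⇉ Y` is transparent and `(Z, δ_Z)` is a subspace of `(Y, δ_Y)`, then the
restriction `S :⊆ X ⇉ Z` of `T` to `{x ∈ dom T : T x ⊆ Z}` is also transparent. -/
theorem transparent_restrict_codomain {X Y : Type*}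
    (δX : RepSpace X) (δY : RepSpace Y) (Z : Set Y) (δZ : RepSpace Z)
    (hdom : δZ.dom = {p | p ∈ δY.dom ∧ δY.map p ∈ Z})
    (hmap : ∀ p ∈ δZ.dom, (δZ.map p : Y) = δY.map p)
    (T : X → Set Y) (hT : Transparent δX δY T) :
    Transparent δX δZ (fun x => {z : Z | (z : Y) ∈ T x ∧ T x ⊆ Z}) := by
  intro g hg
  set S : X → Set Z := fun x => {z : Z | (z : Y) ∈ T x ∧ T x ⊆ Z} with hS
  -- lift g to Y
  set g' : Y → Set Y := fun y => {w : Y | ∃ hy : y ∈ Z, ∃ z' ∈ g ⟨y, hy⟩, (z' : Y) = w} with hg'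
  have hg'cts : MCts δY δY g' := by
    obtain ⟨G, hGc, hG⟩ := hg
    refine ⟨G, hGc, ?_⟩
    intro p hp hne
    obtain ⟨w, hyZ, z', hz', hzw⟩ := hne
    have hpZ : p ∈ δZ.dom := by rw [hdom]; exact ⟨hp, hyZ⟩
    have hmapp : δZ.map p = ⟨δY.map p, hyZ⟩ := Subtype.ext (hmap p hpZ)
    have hne' : (g (δZ.map p)).Nonempty := by rw [hmapp]; exact ⟨z', hz'⟩
    obtain ⟨h1, h2, h3⟩ := hG p hpZ hne'
    have h2' : G.toFun p ∈ δY.dom ∧ δY.map (G.toFun p) ∈ Z := by rw [hdom] at h2; exact h2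
    refine ⟨h1, h2'.1, ?_⟩
    exact ⟨hyZ, δZ.map (G.toFun p), by rw [← hmapp]; exact h3, hmap _ h2⟩
  obtain ⟨f, hfcts, hfT⟩ := hT g' hg'cts
  refine ⟨f, hfcts, ?_⟩
  intro x hx
  -- unpack nonemptiness of MComp g S x
  obtain ⟨w0, hall0, z0, hz0S, hw0⟩ := hx
  have hTxZ : T x ⊆ Z := hz0S.2
  -- MComp g' T x is nonempty
  have hg'Tne : (MComp g' T x).Nonempty := by
    refine ⟨(w0 : Y), ?_, (z0 : Y), hz0S.1, ?_⟩
    · intro y hy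
      obtain ⟨z1, hz1⟩ := hall0 ⟨y, hTxZ hy⟩ ⟨hy, hTxZ⟩
      exact ⟨(z1 : Y), hTxZ hy, z1, hz1, rfl⟩
    · exact ⟨hTxZ hz0S.1, w0, hw0, rfl⟩
  obtain ⟨hTfne, hTfsub⟩ := hfT x hg'Tne
  obtain ⟨v0, hallT, x0, hx0f, hv0⟩ := hTfne
  have hv0mem : v0 ∈ MComp T f x := ⟨hallT, x0, hx0f, hv0⟩
  -- every value of T on f x lands in Z
  have hTz : ∀ x' ∈ f x, T x' ⊆ Z := by
    intro x' hx' w hw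
    have : w ∈ MComp g' T x := hTfsub ⟨hallT, x', hx', hw⟩
    obtain ⟨-, y, -, hy, z', -, rfl⟩ := this
    exact z'.2
  have hSne : ∀ x' ∈ f x, (S x').Nonempty := by
    intro x' hx'
    obtain ⟨w, hw⟩ := hallT x' hx'
    exact ⟨⟨w, hTz x' hx' hw⟩, hw, hTz x' hx'⟩
  constructor
  · obtain ⟨w1, hw1⟩ := hallT x0 hx0f
    exact ⟨⟨w1, hTz x0 hx0f hw1⟩, hSne, x0, hx0f, hw1, hTz x0 hx0f⟩
  · rintro z ⟨hzall, x', hx'f, hzS⟩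
    have hzT : (z : Y) ∈ MComp T f x := ⟨hallT, x', hx'f, hzS.1⟩
    obtain ⟨hally, y, hyT, hyZ, z', hz'g, hz'eq⟩ := hTfsub hzT
    have hzz : z' = z := Subtype.ext hz'eq
    refine ⟨?_, ⟨y, hyZ⟩, ⟨hyT, hTxZ⟩, hzz ▸ hz'g⟩
    intro z1 hz1
    obtain ⟨w, hy1, z2, hz2, -⟩ := hally (z1 : Y) hz1.1
    have : (⟨(z1 : Y), hy1⟩ : Z) = z1 := Subtype.ext rfl
    exact ⟨z2, this ▸ hz2⟩
end

section
/- Every probe ζ :⊆ Y ⇉ ℕ^ℕ for a represented space Y is surjective (for every q ∈ ℕ^ℕ there is y ∈ dom(ζ) with q ∈ ζ(y)) and is transparent as a partial multivalued function from Y to ℕ^ℕ (where ℕ^ℕ carries the identity representation). -/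
open Filter Topology

lemma PFunB.comp_isContinuous {F G : PFunB} (hF : F.IsContinuous) (hG : G.IsContinuous) :
    (F.comp G).IsContinuous :=
  hF.comp (hG.mono fun _ hp => hp.1) fun _ hp => hp.2

/-- Every probe `ζ :⊆ Y ⇉ ℕ^ℕ` is surjective and transparent. -/
theorem probe_surjective_and_transparent {Y : Type*} (δY : RepSpace Y)
    (ζ : Y → Set (ℕ → ℕ)) (hζ : IsProbe δY ζ) :
    (∀ q : ℕ → ℕ, ∃ y : Y, q ∈ ζ y) ∧ Transparent δY idRep ζ := by
  obtain ⟨hζc, hζp⟩ := hζ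
  constructor
  · -- Surjectivity
    intro q
    have hcst : MCts δY idRep (fun _ => ({q} : Set (ℕ → ℕ))) :=
      ⟨⟨Set.univ, fun _ => q⟩, continuousOn_const,
        fun p _ _ => ⟨trivial, trivial, rfl⟩⟩
    obtain ⟨e, _, he⟩ := hζp (fun _ => {q}) hcst
    have y0 : Y := δY.map (fun _ => 0)
    obtain ⟨⟨z, hz⟩, hsub⟩ := he y0 ⟨q, rfl⟩
    have hzq : z = q := hsub hz
    obtain ⟨_, y', hy'e, hzy⟩ := hz
    exact ⟨y', hzq ▸ hzy⟩
  · -- Transparency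
    intro g hg
    obtain ⟨G, hGc, hGr⟩ := hg
    obtain ⟨F, hFc, hFr⟩ := hζc
    have hcomp : MCts δY idRep (MComp g ζ) := by
      refine ⟨G.comp F, PFunB.comp_isContinuous hGc hFc, ?_⟩
      intro p hp hne
      obtain ⟨z, hall, w, hwζ, _⟩ := hne
      obtain ⟨hpF, -, hFval⟩ := hFr p hp ⟨w, hwζ⟩
      have hFζ : F.toFun p ∈ ζ (δY.map p) := hFval
      obtain ⟨hFG, -, hGval⟩ := hGr (F.toFun p) trivial (hall _ hFζ)
      exact ⟨⟨hpF, hFG⟩, trivial, hall, F.toFun p, hFζ, hGval⟩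
    obtain ⟨e, hec, het⟩ := hζp (MComp g ζ) hcomp
    exact ⟨e, hec, het⟩
end

section
/- Let T :⊆ X ⇉ Y and S :⊆ Y ⇉ Z be partial multivalued functions between represented spaces which are both cylinders and both transparent. Then S ∘ T is transparent. -/
open Filter Topology

section Aux

variable {X : Type u} {Y : Type v} {W : Type w} {Z : Type z}

lemma mcomp_nonempty_iff {f : Y → Set Z} {g : X → Set Y} {x : X} :
    (MComp f g x).Nonempty ↔ (g x).Nonempty ∧ ∀ y ∈ g x, (f y).Nonempty := by
  constructor
  · rintro ⟨z, h1, y, hy, -⟩; exact ⟨⟨y, hy⟩, h1⟩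
  · rintro ⟨⟨y, hy⟩, h⟩
    obtain ⟨z, hz⟩ := h y hy
    exact ⟨z, h, y, hy, hz⟩

lemma tightens_trans {f g h : X → Set Y} (h1 : Tightens f g) (h2 : Tightens g h) :
    Tightens f h := by
  intro x hx
  obtain ⟨hg1, hg2⟩ := h2 x hx
  obtain ⟨hf1, hf2⟩ := h1 x hg1
  exact ⟨hf1, hf2.trans hg2⟩

lemma tightens_comp_left {S : Y → Set Z} {A B : X → Set Y} (h : Tightens A B) :
    Tightens (MComp S A) (MComp S B) := by
  intro x hx
  obtain ⟨hB, hSB⟩ := mcomp_nonempty_iff.mp hx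
  obtain ⟨hA, hAB⟩ := h x hB
  have hSA : ∀ y ∈ A x, (S y).Nonempty := fun y hy => hSB y (hAB hy)
  constructor
  · exact mcomp_nonempty_iff.mpr ⟨hA, hSA⟩
  · rintro z ⟨-, y, hy, hz⟩
    exact ⟨hSB, y, hAB hy, hz⟩

lemma tightens_comp_right {C D : Y → Set Z} {T : X → Set Y} (h : Tightens C D) :
    Tightens (MComp C T) (MComp D T) := by
  intro x hx
  obtain ⟨hT, hDT⟩ := mcomp_nonempty_iff.mp hx
  have hCT : ∀ y ∈ T x, (C y).Nonempty := fun y hy => (h y (hDT y hy)).1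
  constructor
  · exact mcomp_nonempty_iff.mpr ⟨hT, hCT⟩
  · rintro z ⟨-, y, hy, hz⟩
    exact ⟨hDT, y, hy, (h y (hDT y hy)).2 hz⟩

lemma mcomp_assoc_aux {f : X → Set Y} {T : Y → Set W} {S : W → Set Z} {x : X}
    (h2 : ∀ y ∈ f x, (T y).Nonempty)
    (h3 : ∀ y ∈ f x, ∀ w ∈ T y, (S w).Nonempty) :
    MComp (MComp S T) f x = MComp S (MComp T f) x := by
  ext z
  constructor
  · rintro ⟨-, y, hy, -, w, hw, hz⟩
    refine ⟨?_, w, ⟨h2, y, hy, hw⟩, hz⟩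
    rintro v ⟨-, y', hy', hv⟩
    exact h3 y' hy' v hv
  · rintro ⟨hS, v, ⟨-, y, hy, hv⟩, hz⟩
    exact ⟨fun y' hy' => mcomp_nonempty_iff.mpr ⟨h2 y' hy', h3 y' hy'⟩,
      y, hy, fun w' hw' => h3 y hy w' hw', v, hv, hz⟩

lemma tightens_assoc₁ {f : X → Set Y} {T : Y → Set W} {S : W → Set Z} :
    Tightens (MComp (MComp S T) f) (MComp S (MComp T f)) := by
  intro x hx
  obtain ⟨hTf, hSTf⟩ := mcomp_nonempty_iff.mp hx
  obtain ⟨hf, h2⟩ := mcomp_nonempty_iff.mp hTf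
  have h3 : ∀ y ∈ f x, ∀ w ∈ T y, (S w).Nonempty := by
    intro y hy w hw
    exact hSTf w ⟨h2, y, hy, hw⟩
  rw [mcomp_assoc_aux h2 h3]
  exact ⟨hx, subset_rfl⟩

lemma tightens_assoc₂ {f : X → Set Y} {T : Y → Set W} {S : W → Set Z} :
    Tightens (MComp S (MComp T f)) (MComp (MComp S T) f) := by
  intro x hx
  obtain ⟨hf, hSTf⟩ := mcomp_nonempty_iff.mp hx
  have h2 : ∀ y ∈ f x, (T y).Nonempty := fun y hy =>
    (mcomp_nonempty_iff.mp (hSTf y hy)).1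
  have h3 : ∀ y ∈ f x, ∀ w ∈ T y, (S w).Nonempty := fun y hy =>
    (mcomp_nonempty_iff.mp (hSTf y hy)).2
  rw [← mcomp_assoc_aux h2 h3]
  exact ⟨hx, subset_rfl⟩

end Aux

/-- If `T :⊆ X ⇉ Y` and `S :⊆ Y ⇉ Z` are cylinders which are both transparent, then
`S ∘ T` is transparent. -/
theorem comp_transparent {X Y Z : Type*}
    (δX : RepSpace X) (δY : RepSpace Y) (δZ : RepSpace Z)
    (T : X → Set Y) (S : Y → Set Z)
    (hT : IsCylinder δX δY T) (hS : IsCylinder δY δZ S)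
    (htrT : Transparent δX δY T) (htrS : Transparent δY δZ S) :
    Transparent δX δZ (MComp S T) := by
  intro g hg
  obtain ⟨e, he, hSe⟩ := htrS g hg
  obtain ⟨f, hf, hTf⟩ := htrT e he
  refine ⟨f, hf, ?_⟩
  exact tightens_trans tightens_assoc₁
    (tightens_trans (tightens_comp_left hTf)
      (tightens_trans tightens_assoc₂
        (tightens_trans (tightens_comp_right hSe) tightens_assoc₁)))
end
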